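/- Let m, n be coprime positive integers. Let T = {a ∈ ℤ_{≥0}^n : a_i − a_j ≤ m for all i,j, and whenever a_i − a_j = m one has i < j}. Then a vector c = (c_1,...,c_n) ∈ ℤ_{≥0}^n (extended periodically by c_{i+n} = c_i + 1) satisfies max_{i=t}^{t+n−1}(c_i) − min_{i=t}^{t+n−1}(c_i) ≤ m for all t > 0 if and only if max_{i=1}^n(c_i) − min_{i=1}^n(c_i) ≤ m and whenever c_j + m = c_i (with 1 ≤ i,j ≤ n) one has j < i. -/

import Mathlib

/-- Let `m, n` be coprime positive integers and let
`c : ℤ → ℤ` be a sequence with `c_{i+n} = c_i + 1` whose values on `{1,…,n}` are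
nonnegative.  Then every length-`n` window `{t, …, t+n−1}` (for `t > 0`)
satisfies `max − min ≤ m` iff the first window satisfies `max − min ≤ m` and
whenever `c_j + m = c_i` (with `1 ≤ i, j ≤ n`) one has `j < i`. -/
theorem stmt_14 (m n : ℕ) (hm : 0 < m) (hn : 0 < n) (hco : Nat.Coprime m n)
    (c : ℤ → ℤ) (hper : ∀ i : ℤ, c (i + n) = c i + 1)
    (hpos : ∀ i : ℤ, 1 ≤ i → i ≤ n → 0 ≤ c i) :
    (∀ t : ℤ, 1 ≤ t → ∀ i j : ℤ, t ≤ i → i < t + n → t ≤ j → j < t + n →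
        c i - c j ≤ m) ↔
      ((∀ i j : ℤ, 1 ≤ i → i ≤ n → 1 ≤ j → j ≤ n → c i - c j ≤ m) ∧
        (∀ i j : ℤ, 1 ≤ i → i ≤ n → 1 ≤ j → j ≤ n → c j + m = c i → j < i)) := by
  have hn' : (0 : ℤ) < n := by exact_mod_cast hn
  have key : ∀ (k : ℤ) (i : ℤ), c (i + k * n) = c i + k := by
    intro k
    induction k using Int.induction_on with
    | zero => intro i; simp
    | succ k ih =>
        intro i
        have : i + (k + 1 : ℤ) * n = (i + k * n) + n := by ring
        rw [this, hper, ih]; ring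
    | pred k ih =>
        intro i
        have : c (i + (-(k : ℤ) - 1) * n + n) = c (i + (-(k:ℤ)-1) * n) + 1 := hper _
        have h2 : i + (-(k : ℤ) - 1) * n + n = i + (-(k:ℤ)) * n := by ring
        rw [h2, ih] at this
        omega
  constructor
  · intro h
    constructor
    · intro i j h1 h2 h3 h4
      exact h 1 le_rfl i j h1 (by omega) h3 (by omega)
    · intro i j h1 h2 h3 h4 heq
      by_contra hc
      push_neg at hc
      -- i ≤ j
      rcases eq_or_lt_of_le hc with rfl | hlt
      · omega
      · -- i < j, use window starting at i+1 containing j and i+n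
        have hwin := h (i + 1) (by omega) (i + n) j (by omega) (by omega)
          (by omega) (by omega)
        have : c (i + n) = c i + 1 := hper i
        omega
  · rintro ⟨h1, h2⟩ t ht i j hi hi' hj hj'
    set a : ℤ := (i - 1) % n + 1 with ha
    set b : ℤ := (j - 1) % n + 1 with hb
    set ka : ℤ := (i - 1) / n with hka
    set kb : ℤ := (j - 1) / n with hkb
    have hia : i = a + ka * n := by
      have h := Int.mul_ediv_add_emod (i - 1) n
      rw [ha, hka, mul_comm]; omega
    have hjb : j = b + kb * n := by
      have h := Int.mul_ediv_add_emod (j - 1) n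
      rw [hb, hkb, mul_comm]; omega
    have har : 1 ≤ a ∧ a ≤ n := by
      have h1' := Int.emod_nonneg (i - 1) (by omega : (n : ℤ) ≠ 0)
      have h2' := Int.emod_lt_of_pos (i - 1) hn'
      omega
    have hbr : 1 ≤ b ∧ b ≤ n := by
      have h1' := Int.emod_nonneg (j - 1) (by omega : (n : ℤ) ≠ 0)
      have h2' := Int.emod_lt_of_pos (j - 1) hn'
      omega
    have hci : c i = c a + ka := by rw [hia, key]
    have hcj : c j = c b + kb := by rw [hjb, key]
    have hab : c a - c b ≤ m := h1 a b har.1 har.2 hbr.1 hbr.2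
    have hdiff : ka - kb ≤ 1 ∧ kb - ka ≤ 1 := by
      constructor <;> nlinarith [hia, hjb, har.1, har.2, hbr.1, hbr.2, hi, hi', hj, hj', hn']
    rcases le_or_gt (ka - kb) 0 with hle | hgt
    · omega
    · have hk1 : ka - kb = 1 := by omega
      have haltb : a < b := by
        have h5 : ka * (n : ℤ) = kb * n + n := by
          rw [show ka = kb + 1 by omega]; ring
        omega
      have : c a - c b ≠ m := by
        intro hEq
        have := h2 a b har.1 har.2 hbr.1 hbr.2 (by omega)
        omega
      omega
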